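/- For real t, y with t² > y², the function v(t,y) = (I_0(√(t²−y²)) − J_0(√(t²−y²)))/2 satisfies ∂²v/∂t² − ∂²v/∂y² = u(t,y), where u(t,y) = (I_0(√(t²−y²)) + J_0(√(t²−y²)))/2. Consequently both u and v satisfy the fourth-order equation (∂²/∂t² − ∂²/∂y²)² w = w. -/

import Mathlib

open Real


/-- Modified Bessel function of the first kind, order 0. -/
noncomputable def besselI0 (r : ℝ) : ℝ :=
  ∑' k : ℕ, (r / 2) ^ (2 * k) / ((Nat.factorial k : ℝ)) ^ 2

/-- Bessel function of the first kind, order 0. -/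
noncomputable def besselJ0 (r : ℝ) : ℝ :=
  ∑' k : ℕ, (-1 : ℝ) ^ k * (r / 2) ^ (2 * k) / ((Nat.factorial k : ℝ)) ^ 2

/-- Modified Bessel function of the first kind, order 1. -/
noncomputable def besselI1 (r : ℝ) : ℝ :=
  ∑' k : ℕ, (r / 2) ^ (2 * k + 1) / ((Nat.factorial k : ℝ) * (Nat.factorial (k + 1)))

/-- Bessel function of the first kind, order 1. -/
noncomputable def besselJ1 (r : ℝ) : ℝ :=
  ∑' k : ℕ, (-1 : ℝ) ^ k * (r / 2) ^ (2 * k + 1) / ((Nat.factorial k : ℝ) * (Nat.factorial (k + 1)))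

/-- Modified Bessel function of the first kind, order 2. -/
noncomputable def besselI2 (r : ℝ) : ℝ :=
  ∑' k : ℕ, (r / 2) ^ (2 * k + 2) / ((Nat.factorial k : ℝ) * (Nat.factorial (k + 2)))

/-- Bessel function of the first kind, order 2. -/
noncomputable def besselJ2 (r : ℝ) : ℝ :=
  ∑' k : ℕ, (-1 : ℝ) ^ k * (r / 2) ^ (2 * k + 2) / ((Nat.factorial k : ℝ) * (Nat.factorial (k + 2)))

/-- The wave (d'Alembert) operator `∂²/∂t² − ∂²/∂y²`. -/
noncomputable def waveOp (f : ℝ → ℝ → ℝ) : ℝ → ℝ → ℝ := fun t y =>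
  deriv (fun s => deriv (fun s' => f s' y) s) t -
    deriv (fun s => deriv (fun s' => f t s') s) y

namespace TelegraphAux

/-- Sum of a power series with coefficients `c`. -/
noncomputable def S (c : ℕ → ℝ) (x : ℝ) : ℝ := ∑' n, c n * x ^ n

/-- Coefficients of the derived series. -/
noncomputable def Dc (c : ℕ → ℝ) : ℕ → ℝ := fun n => ((n : ℝ) + 1) * c (n + 1)

/-- Growth bound on coefficients. -/
def Bnd (c : ℕ → ℝ) : Prop :=
  ∀ n, |c n| ≤ ((4 : ℝ) ^ n * (Nat.factorial n : ℝ) * (Nat.factorial n : ℝ))⁻¹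

lemma Bnd.D {c : ℕ → ℝ} (h : Bnd c) : Bnd (Dc c) := by
  intro n
  have h1 := h (n + 1)
  have key : ((n : ℝ) + 1) * ((4 : ℝ) ^ (n+1) * (Nat.factorial (n+1) : ℝ) * (Nat.factorial (n+1) : ℝ))⁻¹
      ≤ ((4 : ℝ) ^ n * (Nat.factorial n : ℝ) * (Nat.factorial n : ℝ))⁻¹ := by
    rw [Nat.factorial_succ, pow_succ]
    set F : ℝ := (Nat.factorial n : ℝ)
    have hF : (0:ℝ) < F := by positivity
    have hP : (0:ℝ) < (4:ℝ)^n := by positivity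
    push_cast
    rw [mul_inv_le_iff₀ (by positivity), inv_mul_eq_div, le_div_iff₀ (by positivity)]
    have hN : (1:ℝ) ≤ (n:ℝ) + 1 := by linarith [Nat.cast_nonneg (α := ℝ) n]
    have ht : (0:ℝ) < 4 ^ n * F * F := by positivity
    nlinarith [ht, hN, mul_le_mul_of_nonneg_left hN (le_of_lt ht)]
  calc |Dc c n| = ((n : ℝ) + 1) * |c (n+1)| := by
        rw [Dc, abs_mul, abs_of_nonneg (by positivity : (0:ℝ) ≤ (n:ℝ)+1)]
      _ ≤ ((n : ℝ) + 1) * ((4 : ℝ) ^ (n+1) * (Nat.factorial (n+1) : ℝ) * (Nat.factorial (n+1) : ℝ))⁻¹ :=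
        mul_le_mul_of_nonneg_left h1 (by positivity)
      _ ≤ _ := key

lemma Bnd.le_fact {c : ℕ → ℝ} (h : Bnd c) (n : ℕ) :
    |c n| ≤ ((Nat.factorial n : ℝ))⁻¹ := by
  refine (h n).trans ?_
  have hF : (1:ℝ) ≤ (Nat.factorial n : ℝ) := by
    exact_mod_cast Nat.one_le_iff_ne_zero.mpr (Nat.factorial_ne_zero n)
  have h4 : (1:ℝ) ≤ (4:ℝ) ^ n := one_le_pow₀ (by norm_num)
  apply inv_anti₀ (by positivity)
  nlinarith [mul_le_mul_of_nonneg_left hF (le_trans zero_le_one hF)]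

lemma summable_S {c : ℕ → ℝ} (h : Bnd c) (x : ℝ) :
    Summable (fun n => c n * x ^ n) := by
  have hs : Summable (fun n => |x| ^ n / (Nat.factorial n : ℝ)) :=
    Real.summable_pow_div_factorial |x|
  refine (summable_abs_iff.mp (hs.of_nonneg_of_le (fun n => abs_nonneg _) (fun n => ?_)))
  rw [abs_mul, abs_pow]
  calc |c n| * |x| ^ n ≤ ((Nat.factorial n : ℝ))⁻¹ * |x| ^ n :=
        mul_le_mul_of_nonneg_right (h.le_fact n) (by positivity)
    _ = |x| ^ n / (Nat.factorial n : ℝ) := by ring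

set_option maxHeartbeats 1000000 in
lemma hasDerivAt_S {c : ℕ → ℝ} (h : Bnd c) (x : ℝ) :
    HasDerivAt (S c) (S (Dc c) x) x := by
  set R : ℝ := |x| + 1 with hR
  have hR1 : (1:ℝ) ≤ R := by simp only [hR]; linarith [abs_nonneg x]
  have hxR : x ∈ Metric.ball (0:ℝ) R := by
    simp [Real.dist_eq, hR]
  -- uniform bound
  have hu : Summable (fun n : ℕ => (2 * R) ^ n / (Nat.factorial n : ℝ)) :=
    Real.summable_pow_div_factorial _
  have bound : ∀ (n : ℕ), ∀ z ∈ Metric.ball (0:ℝ) R,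
      ‖c n * ((n : ℝ) * z ^ (n - 1))‖ ≤ (2 * R) ^ n / (Nat.factorial n : ℝ) := by
    intro n z hz
    · have hzR : |z| ≤ R := by
        have := mem_ball_zero_iff.mp hz
        simpa [Real.norm_eq_abs] using this.le
      have hzn : |z| ^ (n - 1) ≤ R ^ (n - 1) :=
        pow_le_pow_left₀ (abs_nonneg z) hzR _
      have hRn : R ^ (n - 1) ≤ R ^ n := pow_le_pow_right₀ hR1 (Nat.sub_le n 1)
      have hn2 : (n : ℝ) ≤ 2 ^ n := by exact_mod_cast (Nat.lt_two_pow_self (n := n)).le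
      calc ‖c n * ((n : ℝ) * z ^ (n - 1))‖
          = |c n| * ((n : ℝ) * |z| ^ (n - 1)) := by
            rw [norm_eq_abs, abs_mul, abs_mul, abs_pow, Nat.abs_cast]
        _ ≤ ((Nat.factorial n : ℝ))⁻¹ * ((2:ℝ) ^ n * R ^ n) := by
            apply mul_le_mul (h.le_fact n) ?_ (by positivity) (by positivity)
            exact mul_le_mul hn2 (hzn.trans hRn) (by positivity) (by positivity)
        _ = (2 * R) ^ n / (Nat.factorial n : ℝ) := by
            rw [mul_pow]; ring
  have key : HasDerivAt (fun z => ∑' n, c n * z ^ n)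
      (∑' n, c n * ((n : ℝ) * x ^ (n - 1))) x := by
    refine hasDerivAt_tsum_of_isPreconnected hu Metric.isOpen_ball
      ((convex_ball (0:ℝ) R).isPreconnected)
      (fun n z _ => (hasDerivAt_pow n z).const_mul (c n))
      (fun n z hz => bound n z hz) hxR (summable_S h x) hxR
  have hsum : Summable (fun n => c n * ((n:ℝ) * x ^ (n - 1))) :=
    Summable.of_norm_bounded hu (fun n => bound n x hxR)
  convert key using 1
  · rfl
  rw [eq_comm, Summable.tsum_eq_zero_add hsum]
  simp only [Nat.cast_zero, zero_mul, mul_zero, zero_add, S]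
  refine tsum_congr fun n => ?_
  simp only [Dc, Nat.add_sub_cancel]
  push_cast
  ring

lemma S_wave_id {c d : ℕ → ℝ} (hc : Bnd c) (hd : Bnd d)
    (hcd : ∀ n : ℕ, 4 * ((n:ℝ) + 1) ^ 2 * c (n + 1) = d n) (s : ℝ) :
    4 * S (Dc c) s + 4 * s * S (Dc (Dc c)) s = S d s := by
  have sf1 : Summable (fun n => 4 * (Dc c n * s ^ n)) := (summable_S hc.D s).mul_left 4
  have sf2 : Summable (fun n => 4 * s * (Dc (Dc c) n * s ^ n)) :=
    (summable_S hc.D.D s).mul_left (4 * s)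
  have sg1 : Summable (fun n => 4 * (Dc c (n + 1) * s ^ (n + 1))) :=
    (summable_nat_add_iff 1).2 sf1
  calc 4 * S (Dc c) s + 4 * s * S (Dc (Dc c)) s
      = (∑' n, 4 * (Dc c n * s ^ n)) + ∑' n, 4 * s * (Dc (Dc c) n * s ^ n) := by
        simp only [S, tsum_mul_left]
    _ = (4 * (Dc c 0 * s ^ 0) + ∑' n, 4 * (Dc c (n + 1) * s ^ (n + 1)))
        + ∑' n, 4 * s * (Dc (Dc c) n * s ^ n) := by rw [Summable.tsum_eq_zero_add sf1]
    _ = 4 * (Dc c 0 * s ^ 0)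
        + ∑' n, (4 * (Dc c (n + 1) * s ^ (n + 1)) + 4 * s * (Dc (Dc c) n * s ^ n)) := by
        rw [Summable.tsum_add sg1 sf2]; ring
    _ = d 0 * s ^ 0 + ∑' n, d (n + 1) * s ^ (n + 1) := by
        congr 1
        · have h0 := hcd 0
          simp only [Dc, Nat.cast_zero, zero_add, one_mul, pow_zero, mul_one] at h0 ⊢
          linear_combination h0
        · refine tsum_congr fun n => ?_
          have h1 := hcd (n + 1)
          simp only [Dc] at *
          push_cast at h1 ⊢
          linear_combination (s ^ (n + 1)) * h1
    _ = S d s := (Summable.tsum_eq_zero_add (summable_S hd s)).symm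

lemma hasDerivAt_comp_t {c : ℕ → ℝ} (hc : Bnd c) (y t : ℝ) :
    HasDerivAt (fun s => S c (s ^ 2 - y ^ 2)) (S (Dc c) (t ^ 2 - y ^ 2) * (2 * t)) t := by
  have h1 : HasDerivAt (fun s : ℝ => s ^ 2 - y ^ 2) (2 * t) t := by
    simpa using (hasDerivAt_pow 2 t).sub_const (y ^ 2)
  exact (hasDerivAt_S hc _).comp t h1

lemma hasDerivAt_comp_y {c : ℕ → ℝ} (hc : Bnd c) (t y : ℝ) :
    HasDerivAt (fun y' => S c (t ^ 2 - y' ^ 2)) (S (Dc c) (t ^ 2 - y ^ 2) * (-(2 * y))) y := by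
  have h1 : HasDerivAt (fun y' : ℝ => t ^ 2 - y' ^ 2) (-(2 * y)) y := by
    simpa using (hasDerivAt_pow 2 y).const_sub (t ^ 2)
  exact (hasDerivAt_S hc _).comp y h1

lemma deriv2_t {c : ℕ → ℝ} (hc : Bnd c) (y t : ℝ) :
    deriv (fun s => deriv (fun s' => S c (s' ^ 2 - y ^ 2)) s) t
      = 2 * S (Dc c) (t ^ 2 - y ^ 2) + 4 * t ^ 2 * S (Dc (Dc c)) (t ^ 2 - y ^ 2) := by
  have hd : (fun s => deriv (fun s' => S c (s' ^ 2 - y ^ 2)) s)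
      = fun s => S (Dc c) (s ^ 2 - y ^ 2) * (2 * s) :=
    funext fun s => (hasDerivAt_comp_t hc y s).deriv
  rw [hd]
  have h2 : HasDerivAt (fun s => S (Dc c) (s ^ 2 - y ^ 2) * (2 * s))
      (S (Dc (Dc c)) (t ^ 2 - y ^ 2) * (2 * t) * (2 * t) + S (Dc c) (t ^ 2 - y ^ 2) * 2) t := by
    have hm : HasDerivAt (fun s : ℝ => 2 * s) 2 t := by
      simpa using (hasDerivAt_id t).const_mul (2:ℝ)
    exact (hasDerivAt_comp_t hc.D y t).mul hm
  rw [h2.deriv]; ring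

lemma deriv2_y {c : ℕ → ℝ} (hc : Bnd c) (t y : ℝ) :
    deriv (fun s => deriv (fun s' => S c (t ^ 2 - s' ^ 2)) s) y
      = -2 * S (Dc c) (t ^ 2 - y ^ 2) + 4 * y ^ 2 * S (Dc (Dc c)) (t ^ 2 - y ^ 2) := by
  have hd : (fun s => deriv (fun s' => S c (t ^ 2 - s' ^ 2)) s)
      = fun s => S (Dc c) (t ^ 2 - s ^ 2) * (-(2 * s)) :=
    funext fun s => (hasDerivAt_comp_y hc t s).deriv
  rw [hd]
  have h2 : HasDerivAt (fun s => S (Dc c) (t ^ 2 - s ^ 2) * (-(2 * s)))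
      (S (Dc (Dc c)) (t ^ 2 - y ^ 2) * (-(2 * y)) * (-(2 * y))
        + S (Dc c) (t ^ 2 - y ^ 2) * (-2)) y := by
    have hm : HasDerivAt (fun s : ℝ => -(2 * s)) (-2) y := by
      simpa using ((hasDerivAt_id y).const_mul (2:ℝ)).fun_neg
    exact (hasDerivAt_comp_y hc.D t y).mul hm
  rw [h2.deriv]; ring


lemma waveOp_S {c d : ℕ → ℝ} (hc : Bnd c) (hd : Bnd d)
    (hcd : ∀ n : ℕ, 4 * ((n:ℝ) + 1) ^ 2 * c (n + 1) = d n) (t y : ℝ) :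
    waveOp (fun t' y' => S c (t' ^ 2 - y' ^ 2)) t y = S d (t ^ 2 - y ^ 2) := by
  have := S_wave_id hc hd hcd (t ^ 2 - y ^ 2)
  rw [waveOp]
  rw [deriv2_t hc y t, deriv2_y hc t y]
  linear_combination this

/-- even coefficients -/
noncomputable def aco : ℕ → ℝ := fun n =>
  if Even n then ((4:ℝ) ^ n * (Nat.factorial n : ℝ) * (Nat.factorial n : ℝ))⁻¹ else 0

/-- odd coefficients -/
noncomputable def bco : ℕ → ℝ := fun n =>
  if Even n then 0 else ((4:ℝ) ^ n * (Nat.factorial n : ℝ) * (Nat.factorial n : ℝ))⁻¹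

/-- all coefficients -/
noncomputable def eco : ℕ → ℝ := fun n =>
  ((4:ℝ) ^ n * (Nat.factorial n : ℝ) * (Nat.factorial n : ℝ))⁻¹

lemma bnd_eco : Bnd eco := fun n => by
  rw [eco, abs_of_nonneg (by positivity)]

lemma bnd_aco : Bnd aco := by
  intro n
  rw [aco]
  split
  · rw [abs_of_nonneg (by positivity)]
  · rw [abs_zero]; positivity

lemma bnd_bco : Bnd bco := by
  intro n
  rw [bco]
  split
  · rw [abs_zero]; positivity
  · rw [abs_of_nonneg (by positivity)]

lemma step_arith (n : ℕ) :
    4 * ((n:ℝ) + 1) ^ 2 * ((4:ℝ) ^ (n+1) * (Nat.factorial (n+1) : ℝ) * (Nat.factorial (n+1) : ℝ))⁻¹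
      = ((4:ℝ) ^ n * (Nat.factorial n : ℝ) * (Nat.factorial n : ℝ))⁻¹ := by
  have hf : ((Nat.factorial n : ℝ)) ≠ 0 := by positivity
  rw [Nat.factorial_succ, pow_succ]
  push_cast
  field_simp
  ring

lemma hab : ∀ n : ℕ, 4 * ((n:ℝ) + 1) ^ 2 * aco (n + 1) = bco n := by
  intro n
  rw [aco, bco]
  rcases Nat.even_or_odd n with he | ho
  · rw [if_pos he, if_neg (by simpa [Nat.even_add_one] using he)]
    ring
  · rw [if_neg (Nat.not_even_iff_odd.mpr ho), if_pos (by simp [Nat.even_add_one, Nat.not_even_iff_odd.mpr ho])]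
    exact step_arith n

lemma hba : ∀ n : ℕ, 4 * ((n:ℝ) + 1) ^ 2 * bco (n + 1) = aco n := by
  intro n
  rw [aco, bco]
  rcases Nat.even_or_odd n with he | ho
  · rw [if_neg (by simpa [Nat.even_add_one] using he), if_pos he]
    exact step_arith n
  · rw [if_pos (by simp [Nat.even_add_one, Nat.not_even_iff_odd.mpr ho]), if_neg (Nat.not_even_iff_odd.mpr ho)]
    ring


lemma bnd_J : Bnd (fun k => (-1:ℝ) ^ k * eco k) := by
  intro k
  rw [abs_mul, abs_pow, abs_neg, abs_one, one_pow, one_mul]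
  exact bnd_eco k

lemma sqrt_term {s : ℝ} (hs : 0 ≤ s) (k : ℕ) :
    (Real.sqrt s / 2) ^ (2 * k) = s ^ k / 4 ^ k := by
  rw [pow_mul, div_pow, Real.sq_sqrt hs]
  norm_num [div_pow]

lemma besselI0_eq {s : ℝ} (hs : 0 ≤ s) : besselI0 (Real.sqrt s) = S eco s := by
  rw [besselI0, S]
  refine tsum_congr fun k => ?_
  rw [sqrt_term hs k, eco]
  simp only [div_eq_mul_inv, mul_inv, sq]
  ring

lemma besselJ0_eq {s : ℝ} (hs : 0 ≤ s) :
    besselJ0 (Real.sqrt s) = ∑' k, ((-1:ℝ) ^ k * eco k) * s ^ k := by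
  rw [besselJ0]
  refine tsum_congr fun k => ?_
  rw [sqrt_term hs k, eco]
  simp only [div_eq_mul_inv, mul_inv, sq]
  ring

lemma bessel_add {s : ℝ} (hs : 0 ≤ s) :
    (besselI0 (Real.sqrt s) + besselJ0 (Real.sqrt s)) / 2 = S aco s := by
  rw [besselI0_eq hs, besselJ0_eq hs, S,
    ← Summable.tsum_add (summable_S bnd_eco s) (summable_S bnd_J s)]
  rw [div_eq_iff (by norm_num : (2:ℝ) ≠ 0), S, ← tsum_mul_right]
  refine tsum_congr fun k => ?_
  rw [eco, aco]
  rcases Nat.even_or_odd k with he | ho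
  · rw [if_pos he, he.neg_one_pow]; ring
  · rw [if_neg (Nat.not_even_iff_odd.mpr ho), ho.neg_one_pow]; ring

lemma bessel_sub {s : ℝ} (hs : 0 ≤ s) :
    (besselI0 (Real.sqrt s) - besselJ0 (Real.sqrt s)) / 2 = S bco s := by
  rw [besselI0_eq hs, besselJ0_eq hs, S,
    ← Summable.tsum_sub (summable_S bnd_eco s) (summable_S bnd_J s)]
  rw [div_eq_iff (by norm_num : (2:ℝ) ≠ 0), S, ← tsum_mul_right]
  refine tsum_congr fun k => ?_
  rw [eco, bco]
  rcases Nat.even_or_odd k with he | ho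
  · rw [if_pos he, he.neg_one_pow]; ring
  · rw [if_neg (Nat.not_even_iff_odd.mpr ho), ho.neg_one_pow]; ring

lemma waveOp_congr {f g : ℝ → ℝ → ℝ}
    (hfg : ∀ t y : ℝ, y ^ 2 < t ^ 2 → f t y = g t y) {t y : ℝ} (h : y ^ 2 < t ^ 2) :
    waveOp f t y = waveOp g t y := by
  have hopen1 : IsOpen {s : ℝ | y ^ 2 < s ^ 2} :=
    isOpen_lt continuous_const (continuous_pow 2)
  have hopen2 : IsOpen {s : ℝ | s ^ 2 < t ^ 2} :=
    isOpen_lt (continuous_pow 2) continuous_const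
  have d1 : deriv (fun s => deriv (fun s' => f s' y) s) t
      = deriv (fun s => deriv (fun s' => g s' y) s) t := by
    apply Filter.EventuallyEq.deriv_eq
    filter_upwards [hopen1.mem_nhds h] with s hs
    apply Filter.EventuallyEq.deriv_eq
    filter_upwards [hopen1.mem_nhds hs] with s' hs'
    exact hfg s' y hs'
  have d2 : deriv (fun s => deriv (fun s' => f t s') s) y
      = deriv (fun s => deriv (fun s' => g t s') s) y := by
    apply Filter.EventuallyEq.deriv_eq
    filter_upwards [hopen2.mem_nhds h] with s hs
    apply Filter.EventuallyEq.deriv_eq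
    filter_upwards [hopen2.mem_nhds hs] with s' hs'
    exact hfg t s' hs'
  rw [waveOp, waveOp, d1, d2]

end TelegraphAux

open TelegraphAux

/-- `v = (I₀ − J₀)(√(t²−y²))/2` satisfies `∂²v/∂t² − ∂²v/∂y² = u` with
`u = (I₀ + J₀)(√(t²−y²))/2`, and consequently both `u` and `v` satisfy the
fourth-order equation `(∂²/∂t² − ∂²/∂y²)² w = w` on `{|y| < t}`. -/
theorem telegraph_v_and_fourth_order
    (u v : ℝ → ℝ → ℝ)
    (hu : ∀ t y : ℝ, u t y =
      (besselI0 (Real.sqrt (t ^ 2 - y ^ 2)) + besselJ0 (Real.sqrt (t ^ 2 - y ^ 2))) / 2)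
    (hv : ∀ t y : ℝ, v t y =
      (besselI0 (Real.sqrt (t ^ 2 - y ^ 2)) - besselJ0 (Real.sqrt (t ^ 2 - y ^ 2))) / 2)
    (t y : ℝ) (h : |y| < t) :
    waveOp v t y = u t y ∧
      waveOp (waveOp u) t y = u t y ∧
      waveOp (waveOp v) t y = v t y := by
  have hq : y ^ 2 < t ^ 2 := by
    have h0 : (0:ℝ) ≤ |y| := abs_nonneg y
    nlinarith [sq_abs y]
  have hUu : ∀ t' y' : ℝ, y' ^ 2 < t' ^ 2 → u t' y' = S aco (t' ^ 2 - y' ^ 2) := by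
    intro t' y' h'
    rw [hu t' y', bessel_add (by linarith : (0:ℝ) ≤ t' ^ 2 - y' ^ 2)]
  have hVv : ∀ t' y' : ℝ, y' ^ 2 < t' ^ 2 → v t' y' = S bco (t' ^ 2 - y' ^ 2) := by
    intro t' y' h'
    rw [hv t' y', bessel_sub (by linarith : (0:ℝ) ≤ t' ^ 2 - y' ^ 2)]
  have wU : ∀ t' y' : ℝ, waveOp (fun a b => S aco (a ^ 2 - b ^ 2)) t' y'
      = S bco (t' ^ 2 - y' ^ 2) := fun t' y' => waveOp_S bnd_aco bnd_bco hab t' y'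
  have wV : ∀ t' y' : ℝ, waveOp (fun a b => S bco (a ^ 2 - b ^ 2)) t' y'
      = S aco (t' ^ 2 - y' ^ 2) := fun t' y' => waveOp_S bnd_bco bnd_aco hba t' y'
  have wu : ∀ t' y' : ℝ, y' ^ 2 < t' ^ 2 → waveOp u t' y' = S bco (t' ^ 2 - y' ^ 2) := by
    intro t' y' h'
    rw [waveOp_congr hUu h', wU]
  have wv : ∀ t' y' : ℝ, y' ^ 2 < t' ^ 2 → waveOp v t' y' = S aco (t' ^ 2 - y' ^ 2) := by
    intro t' y' h'
    rw [waveOp_congr hVv h', wV]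
  refine ⟨(wv t y hq).trans (hUu t y hq).symm, ?_, ?_⟩
  · rw [waveOp_congr wu hq, wV t y, (hUu t y hq).symm]
  · rw [waveOp_congr wv hq, wU t y, (hVv t y hq).symm]
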